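/- arXiv:1703.04440 — 2 statements merged into one kernel-verified Lean document; each statement's English description precedes it below -/
import Mathlib

section
/- Suppose P is a symmetric positive definite n×n matrix, X̃ is a symmetric matrix with B ᵀX̃ = 0, and AᵀX̃ + X̃A + NᵀX̃N ≥ 0 with AᵀX̃ + X̃A + NᵀX̃N ≠ 0, where AP + PAᵀ + NPNᵀ = −BBᵀ. Then a contradiction follows; i.e., no such X̃ exists. Equivalently: if P > 0 solves AP + PAᵀ + NPNᵀ = −BBᵀ and X̃ is symmetric with BᵀX̃ = 0 and AᵀX̃ + X̃A + NᵀX̃N positive semidefinite, then AᵀX̃ + X̃A + NᵀX̃N = 0. -/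
open Matrix
open scoped MatrixOrder

lemma trace_transpose_mul_self_eq_zero {k n : ℕ} (A : Matrix (Fin k) (Fin n) ℝ)
    (h : (Aᵀ * A).trace = 0) : A = 0 := by
  have hdiag : ∀ j, (Aᵀ * A) j j = ∑ i, A i j ^ 2 := by
    intro j
    simp [Matrix.mul_apply, Matrix.transpose_apply, sq]
  have hsum : ∑ j, ∑ i, A i j ^ 2 = 0 := by
    rw [← h, Matrix.trace]
    simp [Matrix.diag, hdiag]
  ext i j
  have h1 : ∀ j ∈ Finset.univ, (∑ i, A i j ^ 2) = 0 := by
    rw [Finset.sum_eq_zero_iff_of_nonneg (fun j _ => Finset.sum_nonneg fun i _ => sq_nonneg _)] at hsum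
    exact hsum
  have h2 := (Finset.sum_eq_zero_iff_of_nonneg (fun i _ => sq_nonneg (A i j))).mp
    (h1 j (Finset.mem_univ j)) i (Finset.mem_univ i)
  simpa using sq_eq_zero_iff.mp h2

/-- If `P > 0` solves the generalized Lyapunov equation `AP + PAᵀ + NPNᵀ = -BBᵀ` and
`X̃` is symmetric with `BᵀX̃ = 0` and `AᵀX̃ + X̃A + NᵀX̃N` positive semidefinite, then
`AᵀX̃ + X̃A + NᵀX̃N = 0`. -/
theorem stmt3 (n m : ℕ) (A N : Matrix (Fin n) (Fin n) ℝ)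
    (B : Matrix (Fin n) (Fin m) ℝ) (P : Matrix (Fin n) (Fin n) ℝ)
    (hP : P.PosDef) (hLyap : A * P + P * Aᵀ + N * P * Nᵀ = -(B * Bᵀ))
    (X : Matrix (Fin n) (Fin n) ℝ) (hXsym : Xᵀ = X)
    (hBX : Bᵀ * X = 0) (hPSD : (Aᵀ * X + X * A + Nᵀ * X * N).PosSemidef) :
    Aᵀ * X + X * A + Nᵀ * X * N = 0 := by
  set M := Aᵀ * X + X * A + Nᵀ * X * N with hM
  set S := CFC.sqrt M with hS
  have hSS : S * S = M := CFC.sqrt_mul_sqrt_self M hPSD.nonneg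
  have hSsym : Sᵀ = S := by
    have := (CFC.sqrt_nonneg M).posSemidef.1
    simpa [Matrix.IsHermitian] using this
  set Q := CFC.sqrt P with hQ
  have hQQ : Q * Q = P := CFC.sqrt_mul_sqrt_self P hP.posSemidef.nonneg
  have hQsym : Qᵀ = Q := by
    have := (CFC.sqrt_nonneg P).posSemidef.1
    simpa [Matrix.IsHermitian] using this
  -- trace (P * M) = 0
  have htr : (P * M).trace = 0 := by
    have key : (P * M).trace = ((A * P + P * Aᵀ + N * P * Nᵀ) * X).trace := by
      simp only [hM, Matrix.mul_add, Matrix.add_mul, Matrix.trace_add, ← Matrix.mul_assoc]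
      rw [Matrix.trace_mul_cycle P X A, Matrix.trace_mul_cycle (P * Nᵀ) X N,
        ← Matrix.mul_assoc N P Nᵀ]
      ring
    rw [key, hLyap]
    have : B * Bᵀ * X = B * (Bᵀ * X) := by rw [Matrix.mul_assoc]
    rw [Matrix.neg_mul, this, hBX, Matrix.mul_zero, Matrix.trace_neg, Matrix.trace_zero, neg_zero]
  -- trace ((Q*S)ᵀ * (Q*S)) = 0
  have htr2 : ((Q * S)ᵀ * (Q * S)).trace = 0 := by
    have : (Q * S)ᵀ * (Q * S) = S * (Q * Q) * S := by
      rw [Matrix.transpose_mul, hSsym, hQsym, Matrix.mul_assoc, Matrix.mul_assoc,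
        Matrix.mul_assoc]
    rw [this, hQQ, ← htr, Matrix.trace_mul_cycle S P S, hSS, Matrix.trace_mul_comm]
  have hQS : Q * S = 0 := trace_transpose_mul_self_eq_zero _ htr2
  have hPS : P * S = 0 := by rw [← hQQ, Matrix.mul_assoc, hQS, Matrix.mul_zero]
  have hPinv : P⁻¹ * P = 1 := Matrix.nonsing_inv_mul P (isUnit_iff_ne_zero.mpr hP.det_pos.ne')
  have hSzero : S = 0 := by
    calc S = (P⁻¹ * P) * S := by rw [hPinv, Matrix.one_mul]
    _ = P⁻¹ * (P * S) := by rw [Matrix.mul_assoc]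
    _ = 0 := by rw [hPS, Matrix.mul_zero]
  rw [← hSS, hSzero, Matrix.mul_zero]
end

section
/- Let P be a symmetric positive semidefinite n×n matrix and B ∈ ℝ^{n×m} a matrix whose column space is contained in the column space of P. Then for α ≥ ‖BᵀP†B‖₂ (the spectral norm, where P† is the Moore–Penrose pseudoinverse of P), the matrix αP − BBᵀ is positive semidefinite. -/
open Matrix
open scoped Matrix.Norms.L2Operator

/-- If `P ≥ 0`, `range B ⊆ range P`, `Pdag` is the Moore–Penrose inverse of `P`,
and `α ≥ ‖Bᵀ P† B‖₂`, then `αP - BBᵀ` is positive semidefinite. -/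
theorem stmt6 (n m : ℕ) (P : Matrix (Fin n) (Fin n) ℝ)
    (B : Matrix (Fin n) (Fin m) ℝ) (hP : P.PosSemidef)
    (hrange : LinearMap.range B.mulVecLin ≤ LinearMap.range P.mulVecLin)
    (Pdag : Matrix (Fin n) (Fin n) ℝ)
    (h1 : P * Pdag * P = P) (h2 : Pdag * P * Pdag = Pdag)
    (h3 : (P * Pdag)ᵀ = P * Pdag) (h4 : (Pdag * P)ᵀ = Pdag * P)
    (α : ℝ) (hα : ‖Bᵀ * Pdag * B‖ ≤ α) :
    (α • P - B * Bᵀ).PosSemidef := by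
  have hPsym : Pᵀ = P := by have := hP.1.eq; simpa using this
  obtain ⟨S, hSS, hSsym⟩ : ∃ S : Matrix (Fin n) (Fin n) ℝ, S * S = P ∧ Sᵀ = S := by
    open scoped MatrixOrder in
    refine ⟨CFC.sqrt P, CFC.sqrt_mul_sqrt_self P hP.nonneg, ?_⟩
    have := (CFC.sqrt_nonneg P).posSemidef.1.eq; simpa using this
  -- P * Pdag * B = B
  have hPB : P * Pdag * B = B := by
    ext i j
    obtain ⟨v, hv⟩ := hrange ⟨Pi.single j 1, rfl⟩
    have hv' : P *ᵥ v = B *ᵥ Pi.single j 1 := hv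
    have key : (P * Pdag) *ᵥ (B *ᵥ Pi.single j 1) = B *ᵥ Pi.single j 1 := by
      rw [← hv', Matrix.mulVec_mulVec, h1]
    rw [Matrix.mulVec_mulVec] at key
    have := congrFun key i
    simpa using this
  -- Bᵀ * (P * Pdag) = Bᵀ
  have e1 : Bᵀ * (P * Pdag) = Bᵀ := by
    calc Bᵀ * (P * Pdag) = Bᵀ * (P * Pdag)ᵀ := by rw [h3]
    _ = ((P * Pdag) * B)ᵀ := (Matrix.transpose_mul _ _).symm
    _ = Bᵀ := by rw [hPB]
  have e2 : Pdagᵀ * P = P * Pdag := by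
    have := congrArg Matrix.transpose h3
    rw [Matrix.transpose_transpose, Matrix.transpose_mul, hPsym] at this
    exact this.symm
  set C := S * (Pdag * B) with hCdef
  have hCT : Cᵀ = Bᵀ * Pdagᵀ * S := by
    rw [hCdef, Matrix.transpose_mul, Matrix.transpose_mul, hSsym, Matrix.mul_assoc]
  have hCS : Cᵀ * S = Bᵀ := by
    calc Cᵀ * S = Bᵀ * Pdagᵀ * S * S := by rw [hCT]
    _ = Bᵀ * (Pdagᵀ * P) := by rw [Matrix.mul_assoc, hSS, Matrix.mul_assoc]
    _ = Bᵀ * (P * Pdag) := by rw [e2]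
    _ = Bᵀ := e1
  have hCC : Cᵀ * C = Bᵀ * Pdag * B := by
    calc Cᵀ * C = (Cᵀ * S) * (Pdag * B) := by rw [hCdef, Matrix.mul_assoc]
    _ = Bᵀ * (Pdag * B) := by rw [hCS]
    _ = Bᵀ * Pdag * B := (Matrix.mul_assoc _ _ _).symm
  -- norm bound
  have h5 : Cᴴ = Cᵀ := Matrix.conjTranspose_eq_transpose_of_trivial C
  have hnorm : ‖Cᵀ‖ * ‖Cᵀ‖ ≤ α := by
    have h7 : ‖Bᵀ * Pdag * B‖ = ‖C‖ * ‖C‖ := by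
      rw [← hCC, ← h5]; exact Matrix.l2_opNorm_conjTranspose_mul_self C
    have h6 : ‖Cᵀ‖ = ‖C‖ := by rw [← h5]; exact Matrix.l2_opNorm_conjTranspose C
    rw [h6]; rw [h7] at hα; exact hα
  refine Matrix.PosSemidef.of_dotProduct_mulVec_nonneg ?_ ?_
  · show (α • P - B * Bᵀ)ᴴ = _
    simp [Matrix.conjTranspose_sub, Matrix.conjTranspose_smul, Matrix.conjTranspose_mul,
      Matrix.conjTranspose_eq_transpose_of_trivial, hPsym]
  · intro x
    simp only [Matrix.sub_mulVec, Matrix.smul_mulVec, dotProduct_sub,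
      dotProduct_smul, RCLike.star_def, star_trivial, RCLike.re_to_real, smul_eq_mul]
    rw [sub_nonneg]
    set y : EuclideanSpace ℝ (Fin n) := (EuclideanSpace.equiv (Fin n) ℝ).symm (S *ᵥ x) with hy
    set q : EuclideanSpace ℝ (Fin m) := (EuclideanSpace.equiv (Fin m) ℝ).symm (Cᵀ *ᵥ (S *ᵥ x)) with hq
    have hBx : Bᵀ *ᵥ x = Cᵀ *ᵥ (S *ᵥ x) := by
      rw [Matrix.mulVec_mulVec, hCS]
    have hLHS : x ⬝ᵥ (B * Bᵀ) *ᵥ x = ‖q‖ ^ 2 := by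
      rw [← Matrix.mulVec_mulVec, Matrix.dotProduct_mulVec, ← Matrix.mulVec_transpose, hBx]
      rw [EuclideanSpace.norm_eq, Real.sq_sqrt (by positivity)]
      simp [dotProduct, hq, sq]
    have hRHS : x ⬝ᵥ P *ᵥ x = ‖y‖ ^ 2 := by
      rw [← hSS, ← Matrix.mulVec_mulVec, Matrix.dotProduct_mulVec, ← Matrix.mulVec_transpose, hSsym]
      rw [EuclideanSpace.norm_eq, Real.sq_sqrt (by positivity)]
      simp [dotProduct, hy, sq]
    have hqle : ‖q‖ ≤ ‖Cᵀ‖ * ‖y‖ := Matrix.l2_opNorm_mulVec Cᵀ y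
    have h0 : ‖q‖ ^ 2 ≤ (‖Cᵀ‖ * ‖Cᵀ‖) * ‖y‖ ^ 2 := by nlinarith [norm_nonneg q, norm_nonneg y, norm_nonneg Cᵀ]
    rw [hLHS, hRHS]
    calc ‖q‖^2 ≤ (‖Cᵀ‖*‖Cᵀ‖) * ‖y‖^2 := h0
    _ ≤ α * ‖y‖^2 := by nlinarith [norm_nonneg y, hnorm, sq_nonneg ‖y‖]
end
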